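/- Consider the lazy multiscale method with constant iteration count K at every scale: let f* : [ℓ,u] → ℝ be L-Lipschitz, let S ≥ 1, let x*_s ∈ ℝ^{I_s} with I_s = 2^{S−s+1} + 1 be the exact samples of f* at scale s with ‖x*_S‖₂ ≤ 1, and let the coarsest initialization x_S^0 ∈ ℝ^3 have independent standard normal entries, so E‖x_S^0 − x*_S‖₂ ≤ 2. Let d = q^K where q ∈ (0,1) is the iterate convergence rate of the base algorithm, and suppose the lazy errors e_s = ‖x_s^K − x*_s‖₂ satisfy e_S ≤ d·‖x_S^0 − x*_S‖₂ and e_s ≤ (1 + d)·e_{s+1} + d·(L·(u−ℓ)/2)/√(2^{S−s}) for s = 1,…,S−1. Then E‖x_1^K − x*_1‖₂ ≤ d·(2·(d+1)^{S−1} + (L/2)·(u−ℓ)·(√(2^S)·(d+1)^S − √2·(d+1))/(√(2^S)·(d+1)·(√2·d + √2 − 1))). -/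

import Mathlib

open Finset MeasureTheory ProbabilityTheory

/-- Uniform grid with `I` points on `[l, u]` (0-indexed): `t[i] = l + i·(u−l)/(I−1)`. -/
noncomputable def unifGrid (l u : ℝ) (I : ℕ) (i : ℕ) : ℝ := l + i * (u - l) / ((I : ℝ) - 1)

/-- Euclidean norm of the first `n` entries. -/
noncomputable def vnorm (n : ℕ) (x : ℕ → ℝ) : ℝ := Real.sqrt (∑ i ∈ range n, x i ^ 2)

section ElmcAux

open Real Set

lemma elmc_pdf_eq : ProbabilityTheory.gaussianPDFReal 0 1 =
    fun x : ℝ => (Real.sqrt (2 * Real.pi))⁻¹ * Real.exp (-(2⁻¹) * x ^ 2) := by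
  ext x
  rw [ProbabilityTheory.gaussianPDFReal]
  norm_num
  constructor
  ring

lemma elmc_int_Ioi_x2_exp : ∫ x : ℝ in Ioi (0:ℝ), x ^ 2 * Real.exp (-(2⁻¹) * x ^ 2) =
    Real.sqrt 2 * Real.sqrt Real.pi / 2 := by
  have h := integral_rpow_mul_exp_neg_mul_rpow (p := 2) (q := 2) (b := 2⁻¹)
    (by norm_num) (by norm_num) (by norm_num)
  have he : ∀ x ∈ Ioi (0:ℝ), x ^ (2:ℝ) * Real.exp (-2⁻¹ * x ^ (2:ℝ))
      = x ^ 2 * Real.exp (-(2⁻¹) * x ^ 2) := by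
    intro x hx
    rw [show (2:ℝ) = ((2:ℕ):ℝ) by norm_num, Real.rpow_natCast]
  rw [setIntegral_congr_fun measurableSet_Ioi he] at h
  rw [h]
  have hG : Real.Gamma ((2 + 1) / 2) = Real.sqrt Real.pi / 2 := by
    rw [show ((2:ℝ) + 1) / 2 = 1/2 + 1 by norm_num, Real.Gamma_add_one (by norm_num),
      Real.Gamma_one_half_eq]
    ring
  rw [hG]
  have hb : ((2:ℝ)⁻¹) ^ (-((2:ℝ) + 1) / 2) = 2 * Real.sqrt 2 := by
    rw [Real.inv_rpow (by norm_num : (0:ℝ) ≤ 2), ← Real.rpow_neg (by norm_num : (0:ℝ) ≤ 2)]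
    rw [show -(-((2:ℝ) + 1) / 2) = 1 + 1/2 by norm_num, Real.rpow_add (by norm_num),
      Real.rpow_one, ← Real.sqrt_eq_rpow]
  rw [hb]; ring

lemma elmc_int_x2_exp : ∫ x : ℝ, x ^ 2 * Real.exp (-(2⁻¹) * x ^ 2) =
    Real.sqrt 2 * Real.sqrt Real.pi := by
  have h2 : ∫ x : ℝ, x ^ 2 * Real.exp (-(2⁻¹) * x ^ 2)
      = 2 * ∫ x : ℝ in Ioi (0:ℝ), x ^ 2 * Real.exp (-(2⁻¹) * x ^ 2) := by
    rw [← integral_comp_abs (f := fun y => y ^ 2 * Real.exp (-(2⁻¹) * y ^ 2))]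
    congr 1 with x
    simp [sq_abs]
  rw [h2, elmc_int_Ioi_x2_exp]; ring

lemma elmc_int_x_exp : ∫ x : ℝ, x * Real.exp (-(2⁻¹) * x ^ 2) = 0 := by
  have h := MeasureTheory.integral_neg_eq_self
    (fun x : ℝ => x * Real.exp (-(2⁻¹) * x ^ 2)) (volume : Measure ℝ)
  simp only [neg_sq, neg_mul] at h
  rw [integral_neg] at h
  simp only [neg_mul]
  linarith

lemma elmc_integrable_x2_exp : Integrable (fun x : ℝ => x ^ 2 * Real.exp (-(2⁻¹) * x ^ 2)) := by
  have h := integrable_rpow_mul_exp_neg_mul_sq (b := 2⁻¹) (by norm_num) (s := 2) (by norm_num)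
  have he : (fun x : ℝ => x ^ (2:ℝ) * Real.exp (-2⁻¹ * x ^ 2))
      = fun x : ℝ => x ^ 2 * Real.exp (-(2⁻¹) * x ^ 2) := by
    ext x
    rw [show (2:ℝ) = ((2:ℕ):ℝ) by norm_num, Real.rpow_natCast]
  rwa [he] at h

lemma elmc_integrable_x_exp : Integrable (fun x : ℝ => x * Real.exp (-(2⁻¹) * x ^ 2)) :=
  integrable_mul_exp_neg_mul_sq (b := 2⁻¹) (by norm_num)

lemma elmc_integrable_exp : Integrable (fun x : ℝ => Real.exp (-(2⁻¹) * x ^ 2)) :=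
  integrable_exp_neg_mul_sq (b := 2⁻¹) (by norm_num)

lemma elmc_int_exp : ∫ x : ℝ, Real.exp (-(2⁻¹) * x ^ 2) = Real.sqrt 2 * Real.sqrt Real.pi := by
  have h := integral_gaussian (2⁻¹ : ℝ)
  rw [show Real.pi / 2⁻¹ = 2 * Real.pi by ring, Real.sqrt_mul (by norm_num) Real.pi] at h
  exact h

lemma elmc_gauss_moment (c : ℝ) :
    Integrable (fun x : ℝ => (x - c) ^ 2) (gaussianReal 0 1) ∧
    ∫ x, (x - c) ^ 2 ∂(gaussianReal 0 1) = 1 + c ^ 2 := by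
  have hπ : (0:ℝ) < Real.pi := Real.pi_pos
  set Kc : ℝ := (Real.sqrt (2 * Real.pi))⁻¹ with hKc
  have hK1 : Kc * (Real.sqrt 2 * Real.sqrt Real.pi) = 1 := by
    rw [hKc, Real.sqrt_mul (by norm_num) Real.pi]
    exact inv_mul_cancel₀ (by positivity)
  have hγ : gaussianReal 0 1 = volume.withDensity (gaussianPDF 0 1) :=
    gaussianReal_of_var_ne_zero 0 one_ne_zero
  have hsplit : (fun x : ℝ => (x - c) ^ 2 * gaussianPDFReal 0 1 x)
      = fun x => Kc * (x ^ 2 * Real.exp (-(2⁻¹) * x ^ 2))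
          - 2 * c * Kc * (x * Real.exp (-(2⁻¹) * x ^ 2))
          + c ^ 2 * Kc * Real.exp (-(2⁻¹) * x ^ 2) := by
    ext x; rw [elmc_pdf_eq]; ring
  have hint2 : Integrable (fun x : ℝ => (x - c) ^ 2 * gaussianPDFReal 0 1 x) volume := by
    rw [hsplit]
    exact ((elmc_integrable_x2_exp.const_mul Kc).sub (elmc_integrable_x_exp.const_mul _)).add
      (elmc_integrable_exp.const_mul _)
  have htoReal : ∀ x, (gaussianPDF 0 1 x).toReal = gaussianPDFReal 0 1 x := fun x => by
    rw [gaussianPDF_def]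
    exact ENNReal.toReal_ofReal (gaussianPDFReal_nonneg 0 1 x)
  have hI : Integrable (fun x : ℝ => (x - c) ^ 2) (gaussianReal 0 1) := by
    rw [hγ, integrable_withDensity_iff (measurable_gaussianPDF 0 1)
      (ae_of_all _ fun x => ENNReal.ofReal_lt_top)]
    simpa only [htoReal] using hint2
  refine ⟨hI, ?_⟩
  have hgpdf : gaussianPDF 0 1 = fun x => (((gaussianPDFReal 0 1 x).toNNReal : NNReal) : ENNReal) := by
    funext x; rw [gaussianPDF_def]; rfl
  have hchg : ∫ x, (x - c) ^ 2 ∂(gaussianReal 0 1)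
      = ∫ x : ℝ, (x - c) ^ 2 * gaussianPDFReal 0 1 x := by
    rw [hγ, hgpdf, integral_withDensity_eq_integral_smul
      ((measurable_gaussianPDFReal 0 1).real_toNNReal) (fun x => (x - c) ^ 2)]
    congr 1 with x
    rw [NNReal.smul_def, smul_eq_mul, Real.coe_toNNReal _ (gaussianPDFReal_nonneg 0 1 x)]
    ring
  have I1 : Integrable (fun x : ℝ => Kc * (x ^ 2 * Real.exp (-(2⁻¹) * x ^ 2))) volume :=
    elmc_integrable_x2_exp.const_mul Kc
  have I2 : Integrable (fun x : ℝ => 2 * c * Kc * (x * Real.exp (-(2⁻¹) * x ^ 2))) volume :=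
    elmc_integrable_x_exp.const_mul _
  have I3 : Integrable (fun x : ℝ => c ^ 2 * Kc * Real.exp (-(2⁻¹) * x ^ 2)) volume :=
    elmc_integrable_exp.const_mul _
  have I12 : Integrable (fun x : ℝ => Kc * (x ^ 2 * Real.exp (-(2⁻¹) * x ^ 2))
      - 2 * c * Kc * (x * Real.exp (-(2⁻¹) * x ^ 2))) volume := I1.sub I2
  rw [hchg, hsplit, integral_add I12 I3, integral_sub I1 I2,
    MeasureTheory.integral_const_mul, MeasureTheory.integral_const_mul,
    MeasureTheory.integral_const_mul, elmc_int_x2_exp, elmc_int_x_exp, elmc_int_exp]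
  nlinarith [hK1]

end ElmcAux

/-- Expected lazy multiscale convergence with a constant iteration count `K` at every scale,
from a standard Gaussian initialization at the coarsest scale `S` (which has `I_S = 3` points);
scale `s` has `I_s = 2^(S−s+1) + 1` points and `d = q^K`. -/
theorem expected_lazy_multiscale_convergence
    (l u : ℝ) (hlu : l < u) (S : ℕ) (hS : 1 ≤ S)
    {Ω : Type*} [MeasurableSpace Ω] (μ : Measure Ω) [IsProbabilityMeasure μ]
    (fstar : ℝ → ℝ) (L q : ℝ) (hq0 : 0 < q) (hq1 : q < 1) (K : ℕ)
    (hfLip : ∀ a ∈ Set.Icc l u, ∀ b ∈ Set.Icc l u, |fstar a - fstar b| ≤ L * |a - b|)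
    (xstar : ℕ → ℕ → ℝ) (x0 : Ω → ℕ → ℝ) (xK : Ω → ℕ → ℕ → ℝ)
    (hxstar : ∀ s, 1 ≤ s → s ≤ S → ∀ i < 2 ^ (S - s + 1) + 1,
      xstar s i = fstar (unifGrid l u (2 ^ (S - s + 1) + 1) i))
    (hxstarS : vnorm 3 (xstar S) ≤ 1)
    (hmeas : ∀ i, Measurable fun ω => x0 ω i)
    (hlaw : ∀ i < 3, Measure.map (fun ω => x0 ω i) μ = gaussianReal 0 1)
    (hindep : iIndepFun
      (fun i : Fin 3 => fun ω => x0 ω i.val) μ)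
    (heS : ∀ ω, vnorm 3 (fun i => xK ω S i - xstar S i) ≤
      q ^ K * vnorm 3 (fun i => x0 ω i - xstar S i))
    (hrec : ∀ ω, ∀ s, 1 ≤ s → s < S →
      vnorm (2 ^ (S - s + 1) + 1) (fun i => xK ω s i - xstar s i) ≤
        (1 + q ^ K) * vnorm (2 ^ (S - s - 1 + 1) + 1) (fun i => xK ω (s + 1) i - xstar (s + 1) i)
          + q ^ K * (L * (u - l) / 2) / Real.sqrt ((2 : ℝ) ^ (S - s))) :
    (∫ ω, vnorm 3 (fun i => x0 ω i - xstar S i) ∂μ ≤ 2) ∧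
    (∫ ω, vnorm (2 ^ S + 1) (fun i => xK ω 1 i - xstar 1 i) ∂μ ≤
      q ^ K * (2 * (q ^ K + 1) ^ (S - 1) +
        (L / 2) * (u - l) *
          (Real.sqrt ((2 : ℝ) ^ S) * (q ^ K + 1) ^ S - Real.sqrt 2 * (q ^ K + 1)) /
            (Real.sqrt ((2 : ℝ) ^ S) * (q ^ K + 1) * (Real.sqrt 2 * q ^ K + Real.sqrt 2 - 1)))) := by
  obtain ⟨m, rfl⟩ : ∃ m, S = m + 1 := ⟨S - 1, by omega⟩
  -- basic facts
  have hr1 : (1:ℝ) < Real.sqrt 2 := by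
    rw [show (1:ℝ) = Real.sqrt 1 from (Real.sqrt_one).symm]
    exact Real.sqrt_lt_sqrt (by norm_num) (by norm_num)
  have hr0 : (0:ℝ) < Real.sqrt 2 := by linarith
  have hd0 : (0:ℝ) < q ^ K := pow_pos hq0 K
  have hA1 : (1:ℝ) ≤ 1 + q ^ K := by linarith
  have hrA : 1 < Real.sqrt 2 * (1 + q ^ K) := by nlinarith
  have hsqrtpow : ∀ n : ℕ, Real.sqrt ((2:ℝ) ^ n) = Real.sqrt 2 ^ n := by
    intro n; induction n with
    | zero => simp
    | succ n ih => rw [pow_succ, pow_succ, ← ih, ← Real.sqrt_mul (by positivity)]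
  ------------------------------------------------------------------
  -- Part 1 : expected initial distance at the coarsest scale
  ------------------------------------------------------------------
  have hgmeas : Measurable (fun ω => vnorm 3 (fun i => x0 ω i - xstar (m+1) i)) := by
    simp only [vnorm]
    exact (Finset.measurable_sum _
      (fun i _ => ((hmeas i).sub measurable_const).pow_const 2)).sqrt
  have hmom : ∀ i ∈ Finset.range 3,
      Integrable (fun ω => (x0 ω i - xstar (m+1) i) ^ 2) μ ∧
      ∫ ω, (x0 ω i - xstar (m+1) i) ^ 2 ∂μ = 1 + (xstar (m+1) i) ^ 2 := by
    intro i hi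
    have hi3 := Finset.mem_range.mp hi
    have hXae : AEMeasurable (fun ω => x0 ω i) μ := (hmeas i).aemeasurable
    have hfc : AEStronglyMeasurable (fun x : ℝ => (x - xstar (m+1) i) ^ 2)
        (Measure.map (fun ω => x0 ω i) μ) :=
      ((continuous_id.sub continuous_const).pow 2).aestronglyMeasurable
    constructor
    · have h1 : Integrable (fun x : ℝ => (x - xstar (m+1) i) ^ 2)
          (Measure.map (fun ω => x0 ω i) μ) := by
        rw [hlaw i hi3]; exact (elmc_gauss_moment _).1
      exact (integrable_map_measure hfc hXae).mp h1
    · have h2 : ∫ x, (x - xstar (m+1) i) ^ 2 ∂(Measure.map (fun ω => x0 ω i) μ)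
          = 1 + (xstar (m+1) i) ^ 2 := by
        rw [hlaw i hi3]; exact (elmc_gauss_moment _).2
      rw [integral_map hXae hfc] at h2
      exact h2
  have hsum_int : Integrable (fun ω => ∑ i ∈ Finset.range 3, (x0 ω i - xstar (m+1) i) ^ 2) μ :=
    integrable_finset_sum _ (fun i hi => (hmom i hi).1)
  have hsum_eq : ∫ ω, (∑ i ∈ Finset.range 3, (x0 ω i - xstar (m+1) i) ^ 2) ∂μ
      = ∑ i ∈ Finset.range 3, (1 + (xstar (m+1) i) ^ 2) := by
    rw [integral_finset_sum _ (fun i hi => (hmom i hi).1)]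
    exact Finset.sum_congr rfl (fun i hi => (hmom i hi).2)
  have hcs : ∑ i ∈ Finset.range 3, (xstar (m+1) i) ^ 2 ≤ 1 := by
    have h0 : 0 ≤ ∑ i ∈ Finset.range 3, (xstar (m+1) i) ^ 2 :=
      Finset.sum_nonneg fun i _ => sq_nonneg _
    have h1 : Real.sqrt (∑ i ∈ Finset.range 3, (xstar (m+1) i) ^ 2) ≤ 1 := by
      simpa [vnorm] using hxstarS
    nlinarith [Real.sq_sqrt h0,
      Real.sqrt_nonneg (∑ i ∈ Finset.range 3, (xstar (m+1) i) ^ 2)]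
  have hMem : MemLp (fun ω => vnorm 3 (fun i => x0 ω i - xstar (m+1) i)) 2 μ := by
    refine (memLp_two_iff_integrable_sq hgmeas.aestronglyMeasurable).2 ?_
    refine hsum_int.congr (ae_of_all _ fun ω => ?_)
    simp only [vnorm]
    rw [Real.sq_sqrt (Finset.sum_nonneg fun i _ => sq_nonneg _)]
  have hgInt : Integrable (fun ω => vnorm 3 (fun i => x0 ω i - xstar (m+1) i)) μ :=
    hMem.integrable one_le_two
  have hEg : ∫ ω, vnorm 3 (fun i => x0 ω i - xstar (m+1) i) ∂μ ≤ 2 := by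
    have hvar := variance_nonneg (fun ω => vnorm 3 (fun i => x0 ω i - xstar (m+1) i)) μ
    rw [variance_eq_sub hMem] at hvar
    have hgn : 0 ≤ ∫ ω, vnorm 3 (fun i => x0 ω i - xstar (m+1) i) ∂μ := by
      refine integral_nonneg fun ω => ?_
      simp only [vnorm]
      exact Real.sqrt_nonneg _
    have hsq : μ[(fun ω => vnorm 3 (fun i => x0 ω i - xstar (m+1) i)) ^ 2]
        = ∑ i ∈ Finset.range 3, (1 + (xstar (m+1) i) ^ 2) := by
      rw [← hsum_eq]
      refine integral_congr_ae (ae_of_all _ fun ω => ?_)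
      simp only [Pi.pow_apply, vnorm]
      rw [Real.sq_sqrt (Finset.sum_nonneg fun i _ => sq_nonneg _)]
    rw [hsq] at hvar
    have hval : ∑ i ∈ Finset.range 3, (1 + (xstar (m+1) i) ^ 2)
        = 3 + ∑ i ∈ Finset.range 3, (xstar (m+1) i) ^ 2 := by
      rw [Finset.sum_add_distrib]
      norm_num
    rw [hval] at hvar
    nlinarith [hvar, hgn, hcs]
  refine ⟨hEg, ?_⟩
  ------------------------------------------------------------------
  -- Part 2 : the recursion
  ------------------------------------------------------------------
  have Tsucc : ∀ k : ℕ,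
      (∑ i ∈ Finset.range (k+1), (1 + q ^ K) ^ i * ((Real.sqrt 2)⁻¹) ^ (k + 1 - i))
      = (1 + q ^ K) * (∑ i ∈ Finset.range k, (1 + q ^ K) ^ i * ((Real.sqrt 2)⁻¹) ^ (k - i))
        + ((Real.sqrt 2)⁻¹) ^ (k+1) := by
    intro k
    rw [Finset.sum_range_succ', Finset.mul_sum]
    congr 1
    · refine Finset.sum_congr rfl fun i hi => ?_
      rw [Nat.succ_sub_succ]
      ring
    · simp
  have hQ : ∀ k : ℕ,
      (∑ i ∈ Finset.range k, (1 + q ^ K) ^ i * ((Real.sqrt 2)⁻¹) ^ (k - i))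
          * (Real.sqrt 2 * (1 + q ^ K) - 1) * (Real.sqrt 2) ^ k
        = (Real.sqrt 2) ^ k * (1 + q ^ K) ^ k - 1 := by
    intro k
    induction k with
    | zero => simp
    | succ k ih =>
      rw [Tsucc k]
      have hBr : ((Real.sqrt 2)⁻¹) ^ (k+1) * (Real.sqrt 2) ^ (k+1) = 1 := by
        rw [← mul_pow, inv_mul_cancel₀ (ne_of_gt hr0), one_pow]
      linear_combination ((1 + q ^ K) * Real.sqrt 2) * ih
        + (Real.sqrt 2 * (1 + q ^ K) - 1) * hBr
  have key : ∀ k, k ≤ m → ∀ ω,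
      vnorm (2 ^ (k+1) + 1) (fun i => xK ω (m+1-k) i - xstar (m+1-k) i)
      ≤ (1 + q ^ K) ^ k * (q ^ K * vnorm 3 (fun i => x0 ω i - xstar (m+1) i))
        + q ^ K * (L * (u - l) / 2)
          * (∑ i ∈ Finset.range k, (1 + q ^ K) ^ i * ((Real.sqrt 2)⁻¹) ^ (k - i)) := by
    intro k
    induction k with
    | zero =>
      intro _ ω
      simpa using heS ω
    | succ k ih =>
      intro hk ω
      have h1 := hrec ω (m - k) (by omega) (by omega)
      rw [show m + 1 - (m - k) = k + 1 by omega] at h1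
      simp only [Nat.add_sub_cancel] at h1
      rw [show m - k + 1 = m + 1 - k by omega] at h1
      rw [hsqrtpow (k+1)] at h1
      rw [show m + 1 - (k + 1) = m - k by omega]
      have h2 := ih (by omega) ω
      have h3 := mul_le_mul_of_nonneg_left h2 (by linarith : (0:ℝ) ≤ 1 + q ^ K)
      have hrw : q ^ K * (L * (u - l) / 2) / (Real.sqrt 2) ^ (k+1)
          = q ^ K * (L * (u - l) / 2) * ((Real.sqrt 2)⁻¹) ^ (k+1) := by
        rw [div_eq_mul_inv, inv_pow]
      rw [hrw] at h1
      refine le_trans h1 ?_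
      refine le_trans (add_le_add_left h3 _) (le_of_eq ?_)
      rw [Tsucc k]
      ring
  have bnd : ∀ ω, vnorm (2 ^ (m+1) + 1) (fun i => xK ω 1 i - xstar 1 i)
      ≤ (1 + q ^ K) ^ m * q ^ K * vnorm 3 (fun i => x0 ω i - xstar (m+1) i)
        + q ^ K * (L * (u - l) / 2)
          * (∑ i ∈ Finset.range m, (1 + q ^ K) ^ i * ((Real.sqrt 2)⁻¹) ^ (m - i)) := by
    intro ω
    have h := key m le_rfl ω
    rw [show m + 1 - m = 1 by omega] at h
    exact le_trans h (le_of_eq (by ring))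
  have hIbound : ∫ ω, vnorm (2 ^ (m+1) + 1) (fun i => xK ω 1 i - xstar 1 i) ∂μ
      ≤ (1 + q ^ K) ^ m * q ^ K
          * (∫ ω, vnorm 3 (fun i => x0 ω i - xstar (m+1) i) ∂μ)
        + q ^ K * (L * (u - l) / 2)
          * (∑ i ∈ Finset.range m, (1 + q ^ K) ^ i * ((Real.sqrt 2)⁻¹) ^ (m - i)) := by
    have hint : Integrable (fun ω => (1 + q ^ K) ^ m * q ^ K
        * vnorm 3 (fun i => x0 ω i - xstar (m+1) i)
        + q ^ K * (L * (u - l) / 2)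
          * (∑ i ∈ Finset.range m, (1 + q ^ K) ^ i * ((Real.sqrt 2)⁻¹) ^ (m - i))) μ :=
      (hgInt.const_mul _).add (integrable_const _)
    have hmono := integral_mono_of_nonneg
      (ae_of_all _ fun ω => by simp only [vnorm]; exact Real.sqrt_nonneg _)
      hint (ae_of_all _ bnd)
    rwa [integral_add (hgInt.const_mul _) (integrable_const _),
      MeasureTheory.integral_const_mul, integral_const, probReal_univ,
      one_smul] at hmono
  -- closed form of the geometric sum
  have hden1 : (Real.sqrt 2) ^ (m+1) ≠ 0 := pow_ne_zero _ (ne_of_gt hr0)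
  have hden2 : (1:ℝ) + q ^ K ≠ 0 := by linarith
  have hden3 : Real.sqrt 2 * (1 + q ^ K) - 1 ≠ 0 := by linarith
  have hTm : (∑ i ∈ Finset.range m, (1 + q ^ K) ^ i * ((Real.sqrt 2)⁻¹) ^ (m - i))
      = ((Real.sqrt 2) ^ (m+1) * (1 + q ^ K) ^ (m+1) - Real.sqrt 2 * (1 + q ^ K))
        / ((Real.sqrt 2) ^ (m+1) * (1 + q ^ K) * (Real.sqrt 2 * (1 + q ^ K) - 1)) := by
    rw [eq_div_iff (mul_ne_zero (mul_ne_zero hden1 hden2) hden3)]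
    linear_combination (Real.sqrt 2 * (1 + q ^ K)) * hQ m
  -- final computation
  have hEg2 : (1 + q ^ K) ^ m * q ^ K
      * (∫ ω, vnorm 3 (fun i => x0 ω i - xstar (m+1) i) ∂μ)
      ≤ (1 + q ^ K) ^ m * q ^ K * 2 :=
    mul_le_mul_of_nonneg_left hEg (by positivity)
  refine le_trans hIbound (le_trans (add_le_add_left hEg2 _) (le_of_eq ?_))
  rw [Nat.add_sub_cancel, hsqrtpow (m+1), hTm]
  have hden3' : Real.sqrt 2 * q ^ K + Real.sqrt 2 - 1 ≠ 0 := by nlinarith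
  have hden2' : q ^ K + 1 ≠ 0 := by linarith
  field_simp
  ring
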